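/- (Odd case, trivial invariants g₂ = g₃ = c₀ = 0.) Let n be a natural number, w₀ ∈ ℝ, and consider the interval x > −w₀. Define the potential w(x) := (−15/4 − n(n+4))·(x + w₀)^{−2}. Then: (i) the function z(x) := −2·(x + w₀)^{−2n−3} satisfies the Lie equation z''' + 4wz' + 2w'z = 0 on x > −w₀, with associated constant c_w = w·z² − (z')²/4 + z·z''/2 equal to 0 (parabolic case); and (ii) for any constants α₁, α₂ ∈ ℝ, the function y(x) := α₁·(x + w₀)^{−3/2−n} + α₂·(x + w₀)^{n+5/2} satisfies the Schrödinger equation y'' + w·y = 0 on x > −w₀. -/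
import Mathlib
open Filter Topology

private lemma ev_pos {w₀ x : ℝ} (hx : 0 < x + w₀) : ∀ᶠ t in 𝓝 x, 0 < t + w₀ := by
  have hc : ContinuousAt (fun t : ℝ => t + w₀) x := by fun_prop
  exact Filter.Tendsto.eventually hc (eventually_gt_nhds hx)

private lemma hasDeriv_zc (w₀ c : ℝ) (k : ℤ) {x : ℝ} (hx : x + w₀ ≠ 0) :
    HasDerivAt (fun t : ℝ => c * (t + w₀) ^ k) (c * ↑k * (x + w₀) ^ (k - 1)) x := by
  have h1 : HasDerivAt (fun t : ℝ => t + w₀) 1 x := (hasDerivAt_id x).add_const w₀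
  have h2 := (hasDerivAt_zpow k (x + w₀) (Or.inl hx)).comp x h1
  have h3 := h2.const_mul c
  simpa [mul_assoc] using h3

private lemma deriv_zc (w₀ c : ℝ) (k : ℤ) {x : ℝ} (hx : x + w₀ ≠ 0) :
    deriv (fun t : ℝ => c * (t + w₀) ^ k) x = c * ↑k * (x + w₀) ^ (k - 1) :=
  (hasDeriv_zc w₀ c k hx).deriv

private lemma deriv2_zc (w₀ c : ℝ) (k : ℤ) {x : ℝ} (hx : 0 < x + w₀) :
    deriv (deriv (fun t : ℝ => c * (t + w₀) ^ k)) x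
      = c * ↑k * ↑(k - 1) * (x + w₀) ^ (k - 1 - 1) := by
  have heq : deriv (fun t : ℝ => c * (t + w₀) ^ k)
      =ᶠ[𝓝 x] fun t => c * ↑k * (t + w₀) ^ (k - 1) :=
    (ev_pos hx).mono fun t ht => deriv_zc w₀ c k ht.ne'
  rw [heq.deriv_eq, deriv_zc w₀ (c * ↑k) (k - 1) hx.ne']

private lemma deriv3_zc (w₀ c : ℝ) (k : ℤ) {x : ℝ} (hx : 0 < x + w₀) :
    deriv (deriv (deriv (fun t : ℝ => c * (t + w₀) ^ k))) x
      = c * ↑k * ↑(k - 1) * ↑(k - 1 - 1) * (x + w₀) ^ (k - 1 - 1 - 1) := by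
  have heq : deriv (deriv (fun t : ℝ => c * (t + w₀) ^ k))
      =ᶠ[𝓝 x] fun t => c * ↑k * ↑(k - 1) * (t + w₀) ^ (k - 1 - 1) :=
    (ev_pos hx).mono fun t ht => deriv2_zc w₀ c k ht
  rw [heq.deriv_eq, deriv_zc w₀ (c * ↑k * ↑(k - 1)) (k - 1 - 1) hx.ne']

private lemma hasDeriv_rc (w₀ c p : ℝ) {x : ℝ} (hx : 0 < x + w₀) :
    HasDerivAt (fun t : ℝ => c * (t + w₀) ^ p) (c * p * (x + w₀) ^ (p - 1)) x := by
  have h1 : HasDerivAt (fun t : ℝ => t + w₀) 1 x := (hasDerivAt_id x).add_const w₀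
  have h2 := (Real.hasDerivAt_rpow_const (p := p) (Or.inl hx.ne')).comp x h1
  have h3 := h2.const_mul c
  simpa [mul_assoc] using h3

private lemma deriv_sum_r (w₀ a b p q : ℝ) {x : ℝ} (hx : 0 < x + w₀) :
    deriv (fun t : ℝ => a * (t + w₀) ^ p + b * (t + w₀) ^ q) x
      = a * p * (x + w₀) ^ (p - 1) + b * q * (x + w₀) ^ (q - 1) :=
  ((hasDeriv_rc w₀ a p hx).add (hasDeriv_rc w₀ b q hx)).deriv

private lemma deriv2_sum_r (w₀ a b p q : ℝ) {x : ℝ} (hx : 0 < x + w₀) :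
    deriv (deriv (fun t : ℝ => a * (t + w₀) ^ p + b * (t + w₀) ^ q)) x
      = a * p * (p - 1) * (x + w₀) ^ (p - 1 - 1)
        + b * q * (q - 1) * (x + w₀) ^ (q - 1 - 1) := by
  have heq : deriv (fun t : ℝ => a * (t + w₀) ^ p + b * (t + w₀) ^ q)
      =ᶠ[𝓝 x] fun t => a * p * (t + w₀) ^ (p - 1) + b * q * (t + w₀) ^ (q - 1) :=
    (ev_pos hx).mono fun t ht => deriv_sum_r w₀ a b p q ht
  rw [heq.deriv_eq, deriv_sum_r w₀ (a * p) (b * q) (p - 1) (q - 1) hx]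

private lemma zpow_split {u : ℝ} (hu : u ≠ 0) (k : ℤ) (m : ℕ) :
    u ^ (k - 4 + (m : ℤ)) = u ^ (k - 4) * u ^ m := by
  rw [zpow_add₀ hu, zpow_natCast]

/-- Odd Lamé case with trivial invariants `g₂ = g₃ = c₀ = 0`: on `x > −w₀`, for the potential
`w(x) = (−15/4 − n(n+4))(x+w₀)⁻²`, (i) `z(x) = −2(x+w₀)^{−2n−3}` satisfies the Lie equation
with associated constant `c_w = w·z² − (z')²/4 + z·z''/2 = 0` (parabolic case), and (ii) every
`y(x) = α₁(x+w₀)^{−3/2−n} + α₂(x+w₀)^{n+5/2}` satisfies the Schrödinger equation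
`y'' + w·y = 0`. -/
theorem odd_lame_trivial_invariants
    (n : ℕ) (w₀ : ℝ) :
    (∀ x : ℝ, -w₀ < x →
      deriv (deriv (deriv (fun t : ℝ => -2 * (t + w₀) ^ (-(2 * (n : ℤ)) - 3)))) x
        + 4 * ((-15 / 4 - (n : ℝ) * (n + 4)) / (x + w₀) ^ 2)
            * deriv (fun t : ℝ => -2 * (t + w₀) ^ (-(2 * (n : ℤ)) - 3)) x
        + 2 * deriv (fun t : ℝ => (-15 / 4 - (n : ℝ) * (n + 4)) / (t + w₀) ^ 2) x
            * (-2 * (x + w₀) ^ (-(2 * (n : ℤ)) - 3)) = 0) ∧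
    (∀ x : ℝ, -w₀ < x →
      ((-15 / 4 - (n : ℝ) * (n + 4)) / (x + w₀) ^ 2)
          * (-2 * (x + w₀) ^ (-(2 * (n : ℤ)) - 3)) ^ 2
        - (deriv (fun t : ℝ => -2 * (t + w₀) ^ (-(2 * (n : ℤ)) - 3)) x) ^ 2 / 4
        + (-2 * (x + w₀) ^ (-(2 * (n : ℤ)) - 3))
            * deriv (deriv (fun t : ℝ => -2 * (t + w₀) ^ (-(2 * (n : ℤ)) - 3))) x / 2
        = 0) ∧
    (∀ α₁ α₂ : ℝ, ∀ x : ℝ, -w₀ < x →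
      deriv (deriv (fun t : ℝ =>
          α₁ * (t + w₀) ^ (-(3 / 2 : ℝ) - (n : ℝ)) + α₂ * (t + w₀) ^ ((n : ℝ) + 5 / 2))) x
        + ((-15 / 4 - (n : ℝ) * (n + 4)) / (x + w₀) ^ 2)
            * (α₁ * (x + w₀) ^ (-(3 / 2 : ℝ) - (n : ℝ))
              + α₂ * (x + w₀) ^ ((n : ℝ) + 5 / 2)) = 0) := by
  set C : ℝ := -15 / 4 - (n : ℝ) * (n + 4) with hC
  set k : ℤ := -(2 * (n : ℤ)) - 3 with hk
  have hwfun : (fun t : ℝ => C / (t + w₀) ^ 2) = fun t : ℝ => C * (t + w₀) ^ (-2 : ℤ) := by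
    funext t
    rw [zpow_neg, div_eq_mul_inv, zpow_two, ← sq]
  have hK : ((k : ℝ)) = -(2 * (n : ℝ)) - 3 := by rw [hk]; push_cast; ring
  refine ⟨?_, ?_, ?_⟩
  · intro x hx
    have hu : 0 < x + w₀ := by linarith
    set u : ℝ := x + w₀ with hudef
    rw [deriv3_zc w₀ (-2) k hu, deriv_zc w₀ (-2) k hu.ne', hwfun,
      deriv_zc w₀ C (-2) hu.ne']
    have hm3 : u ^ ((-2 : ℤ) - 1) = (u ^ (3 : ℕ))⁻¹ := by
      rw [show (-2 : ℤ) - 1 = -((3 : ℕ) : ℤ) by norm_num, zpow_neg, zpow_natCast]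
    have e0 : u ^ k = u ^ (k - 4) * u ^ (4 : ℕ) := by
      rw [← zpow_split hu.ne' k 4]; congr 1; push_cast; ring
    have e1 : u ^ (k - 1) = u ^ (k - 4) * u ^ (3 : ℕ) := by
      rw [← zpow_split hu.ne' k 3]; congr 1; push_cast; ring
    have e3 : u ^ (k - 1 - 1 - 1) = u ^ (k - 4) * u ^ (1 : ℕ) := by
      rw [← zpow_split hu.ne' k 1]; congr 1; push_cast; ring
    rw [hm3, e0, e1, e3]
    push_cast
    rw [hK]
    set B : ℝ := u ^ (k - 4)
    field_simp
    ring
  · intro x hx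
    have hu : 0 < x + w₀ := by linarith
    set u : ℝ := x + w₀ with hudef
    rw [deriv2_zc w₀ (-2) k hu, deriv_zc w₀ (-2) k hu.ne']
    have e0 : u ^ k = u ^ (k - 4) * u ^ (4 : ℕ) := by
      rw [← zpow_split hu.ne' k 4]; congr 1; push_cast; ring
    have e1 : u ^ (k - 1) = u ^ (k - 4) * u ^ (3 : ℕ) := by
      rw [← zpow_split hu.ne' k 3]; congr 1; push_cast; ring
    have e2 : u ^ (k - 1 - 1) = u ^ (k - 4) * u ^ (2 : ℕ) := by
      rw [← zpow_split hu.ne' k 2]; congr 1; push_cast; ring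
    rw [e0, e1, e2]
    push_cast
    rw [hK]
    set B : ℝ := u ^ (k - 4)
    field_simp
    ring
  · intro α₁ α₂ x hx
    have hu : 0 < x + w₀ := by linarith
    set p : ℝ := -(3 / 2 : ℝ) - (n : ℝ) with hp
    set q : ℝ := (n : ℝ) + 5 / 2 with hq
    rw [deriv2_sum_r w₀ α₁ α₂ p q hu]
    have e1 : (x + w₀) ^ (p - 1 - 1) = (x + w₀) ^ p / (x + w₀) ^ (2 : ℕ) := by
      rw [show p - 1 - 1 = p - 2 by ring, Real.rpow_sub hu, Real.rpow_two]
    have e2 : (x + w₀) ^ (q - 1 - 1) = (x + w₀) ^ q / (x + w₀) ^ (2 : ℕ) := by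
      rw [show q - 1 - 1 = q - 2 by ring, Real.rpow_sub hu, Real.rpow_two]
    rw [e1, e2]
    set A : ℝ := (x + w₀) ^ p
    set B : ℝ := (x + w₀) ^ q
    field_simp
    rw [hp, hq, hC]
    ring
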